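/- Let {E_t} and {Z_t} be i.i.d. integrable nonnegative sequences with E[Z] < E[E], and let h: ℕ → ℕ satisfy h(n) → ∞ and h(n)/n → 0. Define the store-and-hide request sequence W_t = 0 for t ≤ h(n) and W_t = Z_t for t > h(n). Then for every ε > 0 and all sufficiently large n, P(∃ k ≤ n: Σ_{t=1}^k W_t > Σ_{t=1}^k E_t) ≤ ε. -/

import Mathlib

open MeasureTheory ProbabilityTheory Filter

/-- store-and-hide feasibility. With `{E_t}, {Z_t}` independent i.i.d. integrable
nonnegative sequences, `E[Z] < E[E]`, and a storage-phase length `h(n) → ∞` with `h(n)/n → 0`,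
the store-and-hide requests `W_t = 0` for `t ≤ h(n)`, `W_t = Z_t` afterwards, satisfy: for every
`ε > 0` and all sufficiently large `n`, the probability that the cumulative request ever exceeds
the cumulative harvested energy within `n` slots is at most `ε`. -/
theorem store_and_hide_feasible {Ω : Type*} [MeasurableSpace Ω] (μ : Measure Ω)
    [IsProbabilityMeasure μ] (E Z : ℕ → Ω → ℝ)
    (hmE : ∀ i, Measurable (E i)) (hmZ : ∀ i, Measurable (Z i))
    (hindep : iIndepFun (Sum.elim E Z) μ)
    (hEid : ∀ i, IdentDistrib (E i) (E 0) μ μ)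
    (hZid : ∀ i, IdentDistrib (Z i) (Z 0) μ μ)
    (hEint : Integrable (E 0) μ) (hZint : Integrable (Z 0) μ)
    (hEnn : ∀ i ω, 0 ≤ E i ω) (hZnn : ∀ i ω, 0 ≤ Z i ω)
    (hmean : ∫ ω, Z 0 ω ∂μ < ∫ ω, E 0 ω ∂μ)
    (h : ℕ → ℕ) (hhTop : Tendsto h atTop atTop)
    (hho : Tendsto (fun n => (h n : ℝ) / (n : ℝ)) atTop (nhds 0)) :
    ∀ ε : ℝ, 0 < ε → ∀ᶠ n in atTop,
      μ {ω | ∃ k ≤ n, ∑ t ∈ Finset.range k, E t ω <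
          ∑ t ∈ Finset.range k, (if t < h n then 0 else Z t ω)} ≤ ENNReal.ofReal ε := by
  classical
  intro ε hε
  set D : ℕ → Ω → ℝ := fun i ω => E i ω - Z i ω with hDdef
  have hmD : ∀ i, Measurable (D i) := fun i => (hmE i).sub (hmZ i)
  have hmeasSum : ∀ i : ℕ ⊕ ℕ, Measurable (Sum.elim E Z i) := by
    rintro (i | i)
    · exact hmE i
    · exact hmZ i
  -- pairwise independence of the differences
  have hpair : Pairwise (Function.onFun (IndepFun · · μ) D) := by
    intro i j hij
    exact hindep.indepFun_sub_sub hmeasSum (.inl i) (.inr i) (.inl j) (.inr j)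
      (by simp [hij]) (by simp) (by simp) (by simp [hij])
  -- identical distribution of the differences
  have hEZ : ∀ j, IndepFun (E j) (Z j) μ :=
    fun j => hindep.indepFun (show (Sum.inl j : ℕ ⊕ ℕ) ≠ Sum.inr j by simp)
  have hid : ∀ i, IdentDistrib (D i) (D 0) μ μ := by
    intro i
    have hpairid : IdentDistrib (fun ω => (E i ω, Z i ω)) (fun ω => (E 0 ω, Z 0 ω)) μ μ := by
      refine ⟨((hmE i).prodMk (hmZ i)).aemeasurable,
        ((hmE 0).prodMk (hmZ 0)).aemeasurable, ?_⟩
      rw [(indepFun_iff_map_prod_eq_prod_map_map (hmE i).aemeasurable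
            (hmZ i).aemeasurable).mp (hEZ i),
          (indepFun_iff_map_prod_eq_prod_map_map (hmE 0).aemeasurable
            (hmZ 0).aemeasurable).mp (hEZ 0),
          (hEid i).map_eq, (hZid i).map_eq]
    exact hpairid.comp (measurable_fst.sub measurable_snd)
  have hDint : Integrable (D 0) μ := hEint.sub hZint
  have hslln := strong_law_ae_real D hDint hpair hid
  have hc : 0 < ∫ ω, D 0 ω ∂μ := by
    rw [show (∫ ω, D 0 ω ∂μ) = (∫ ω, E 0 ω ∂μ) - ∫ ω, Z 0 ω ∂μ from
      integral_sub hEint hZint]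
    linarith
  -- the auxiliary sets
  set S : ℕ → Ω → ℝ := fun k ω => ∑ t ∈ Finset.range k, D t ω with hSdef
  set B : ℕ → Set Ω := fun m => {ω | ∃ k, m < k ∧ S k ω < 0} with hBdef
  have hBmeas : ∀ m, MeasurableSet (B m) := by
    intro m
    have : B m = ⋃ k, ⋃ _ : m < k, {ω | S k ω < 0} := by
      ext ω; simp [hBdef]
    rw [this]
    exact MeasurableSet.iUnion fun k => MeasurableSet.iUnion fun _ =>
      measurableSet_lt (Finset.measurable_sum _ fun t _ => hmD t) measurable_const
  have hBanti : Antitone B := by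
    intro m m' hmm' ω hω
    obtain ⟨k, hk, hS⟩ := hω
    exact ⟨k, lt_of_le_of_lt hmm' hk, hS⟩
  have hnull : μ (⋂ m, B m) = 0 := by
    have hae : ∀ᵐ ω ∂μ, ω ∉ ⋂ m, B m := by
      filter_upwards [hslln] with ω hω
      have hev : ∀ᶠ k : ℕ in atTop, 0 < (∑ t ∈ Finset.range k, D t ω) / k :=
        hω.eventually (eventually_gt_nhds hc)
      obtain ⟨N, hN⟩ := hev.exists_forall_of_atTop
      intro hmem
      obtain ⟨k, hkN, hSk⟩ := Set.mem_iInter.mp hmem N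
      have hk0 : (0 : ℝ) < (k : ℝ) := by exact_mod_cast Nat.pos_of_ne_zero (fun hk0 => by simp [hk0] at hkN)
      have : (∑ t ∈ Finset.range k, D t ω) / k < 0 := div_neg_of_neg_of_pos hSk hk0
      exact absurd (hN k hkN.le) (not_lt.mpr this.le)
    have := ae_iff.mp hae
    simpa only [not_not, Set.setOf_mem_eq] using this
  have htend : Tendsto (fun m => μ (B m)) atTop (nhds 0) := by
    have := tendsto_measure_iInter_atTop (fun m => (hBmeas m).nullMeasurableSet) hBanti
      ⟨0, measure_ne_top μ _⟩
    rwa [hnull] at this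
  have htend' : Tendsto (fun n => μ (B (h n))) atTop (nhds 0) := htend.comp hhTop
  have hevlt : ∀ᶠ n in atTop, μ (B (h n)) < ENNReal.ofReal ε :=
    htend'.eventually_lt_const (by simpa using hε)
  filter_upwards [hevlt] with n hn
  refine le_trans (measure_mono ?_) hn.le
  intro ω hω
  obtain ⟨k, hkn, hk⟩ := hω
  have hknh : h n < k := by
    by_contra hle
    push_neg at hle
    have hzero : ∑ t ∈ Finset.range k, (if t < h n then 0 else Z t ω) = 0 := by
      refine Finset.sum_eq_zero fun t ht => ?_
      rw [if_pos (lt_of_lt_of_le (Finset.mem_range.mp ht) hle)]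
    rw [hzero] at hk
    exact absurd hk (not_lt.mpr (Finset.sum_nonneg fun t _ => hEnn t ω))
  refine ⟨k, hknh, ?_⟩
  have hWZ : ∑ t ∈ Finset.range k, (if t < h n then 0 else Z t ω)
      ≤ ∑ t ∈ Finset.range k, Z t ω := by
    refine Finset.sum_le_sum fun t _ => ?_
    split_ifs
    · exact hZnn t ω
    · exact le_rfl
  have : ∑ t ∈ Finset.range k, E t ω < ∑ t ∈ Finset.range k, Z t ω := lt_of_lt_of_le hk hWZ
  have hS : S k ω = ∑ t ∈ Finset.range k, E t ω - ∑ t ∈ Finset.range k, Z t ω := by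
    simp [hSdef, hDdef, Finset.sum_sub_distrib]
  rw [hS]
  linarith
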